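/- Let n ≥ 1, let x, a ∈ ℝⁿ with x ≠ a, let 0 < s < √2 − 1, and let z ∈ ℂⁿ satisfy ‖z − x‖ ≤ s·|x − a|, where ‖·‖ is the Euclidean (Hermitian) norm on ℂⁿ and |·| the Euclidean norm on ℝⁿ. Then the complex number ∑_{j=1}^n (z_j − a_j)² satisfies |∑_{j=1}^n (z_j − a_j)²| ≥ (1 − s(2+s))·|x − a|², and 1 − s(2+s) > 0. -/

import Mathlib

/-- The coordinatewise embedding of `ℝⁿ` into `ℂⁿ`. -/
def complexify {n : ℕ} (x : EuclideanSpace ℝ (Fin n)) : EuclideanSpace ℂ (Fin n) :=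
  WithLp.toLp 2 (fun j => (x j : ℂ))

/-- Let `x, a ∈ ℝⁿ` with `x ≠ a`, let `0 < s < √2 − 1`, and let `z ∈ ℂⁿ` satisfy
`‖z − x‖ ≤ s·|x − a|` (with `ℝⁿ ⊆ ℂⁿ` coordinatewise). Then
`|∑ⱼ (zⱼ − aⱼ)²| ≥ (1 − s(2+s))·|x − a|²` and `1 − s(2+s) > 0`. -/
theorem sum_sq_lower_bound {n : ℕ} (hn : 1 ≤ n)
    (x a : EuclideanSpace ℝ (Fin n)) (hxa : x ≠ a)
    (s : ℝ) (hs0 : 0 < s) (hs1 : s < Real.sqrt 2 - 1)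
    (z : EuclideanSpace ℂ (Fin n))
    (hz : ‖z - complexify x‖ ≤ s * ‖x - a‖) :
    (1 - s * (2 + s)) * ‖x - a‖ ^ 2 ≤ ‖∑ j, (z j - (a j : ℂ)) ^ 2‖ ∧
      0 < 1 - s * (2 + s) := by
  have h2 : Real.sqrt 2 ^ 2 = 2 := Real.sq_sqrt (by norm_num)
  have hpos : 0 < 1 - s * (2 + s) := by nlinarith [Real.sqrt_nonneg 2]
  refine ⟨?_, hpos⟩
  set R := ‖x - a‖ with hRdef
  have hR0 : 0 < R := by
    simpa [hRdef] using (norm_pos_iff.mpr (sub_ne_zero.mpr hxa))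
  set u : EuclideanSpace ℂ (Fin n) := z - complexify x with hu
  have hua : ∀ j, u j = z j - (x j : ℂ) := fun j => rfl
  -- R^2 as sum of real squares
  have hR2 : R ^ 2 = ∑ j, (x j - a j) ^ 2 := by
    rw [hRdef, PiLp.norm_sq_eq_of_L2]
    simp [PiLp.sub_apply, sq_abs]
  -- norm of u squared
  have hU2 : ‖u‖ ^ 2 = ∑ j, ‖u j‖ ^ 2 := PiLp.norm_sq_eq_of_L2 _ u
  -- split
  have hsplit : (∑ j, (z j - (a j : ℂ)) ^ 2) =
      (∑ j, u j ^ 2) + 2 * (∑ j, u j * ((x j : ℂ) - (a j : ℂ))) + ((R ^ 2 : ℝ) : ℂ) := by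
    rw [hR2]
    push_cast
    rw [Finset.mul_sum, ← Finset.sum_add_distrib, ← Finset.sum_add_distrib]
    refine Finset.sum_congr rfl fun j _ => ?_
    rw [hua j]; ring
  -- bound on A
  have hA : ‖∑ j, u j ^ 2‖ ≤ ‖u‖ ^ 2 := by
    rw [hU2]
    refine le_trans (norm_sum_le _ _) (le_of_eq (Finset.sum_congr rfl fun j _ => ?_))
    exact norm_pow _ _
  -- Cauchy–Schwarz for B
  have hB : ‖∑ j, u j * ((x j : ℂ) - (a j : ℂ))‖ ≤ ‖u‖ * R := by
    set w : EuclideanSpace ℂ (Fin n) := WithLp.toLp 2 (fun j => (starRingEnd ℂ) (u j)) with hw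
    set v : EuclideanSpace ℂ (Fin n) := complexify (x - a) with hv
    have hinner : (inner ℂ w v : ℂ) = ∑ j, u j * ((x j : ℂ) - (a j : ℂ)) := by
      rw [PiLp.inner_apply]
      refine Finset.sum_congr rfl fun j _ => ?_
      simp [hw, hv, complexify, PiLp.sub_apply, RCLike.inner_apply, mul_comm]
    have hnw : ‖w‖ = ‖u‖ := by
      have : ‖w‖ ^ 2 = ‖u‖ ^ 2 := by
        rw [PiLp.norm_sq_eq_of_L2, PiLp.norm_sq_eq_of_L2]
        exact Finset.sum_congr rfl fun j _ => by simp [hw]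
      calc ‖w‖ = Real.sqrt (‖w‖ ^ 2) := (Real.sqrt_sq (norm_nonneg _)).symm
        _ = Real.sqrt (‖u‖ ^ 2) := by rw [this]
        _ = ‖u‖ := Real.sqrt_sq (norm_nonneg _)
    have hnv : ‖v‖ = R := by
      have : ‖v‖ ^ 2 = R ^ 2 := by
        rw [PiLp.norm_sq_eq_of_L2, hR2]
        refine Finset.sum_congr rfl fun j _ => ?_
        rw [show v j = ((x j - a j : ℝ) : ℂ) from by simp [hv, complexify, PiLp.sub_apply]]
        rw [Complex.norm_real]; exact sq_abs _
      nlinarith [norm_nonneg v, hR0]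
    calc ‖∑ j, u j * ((x j : ℂ) - (a j : ℂ))‖ = ‖(inner ℂ w v : ℂ)‖ := by
          rw [hinner]
      _ ≤ ‖w‖ * ‖v‖ := norm_inner_le_norm w v
      _ = ‖u‖ * R := by rw [hnw, hnv]
  have hU : ‖u‖ ≤ s * R := hz
  have hUn : 0 ≤ ‖u‖ := norm_nonneg u
  -- final
  have key : (R ^ 2 : ℝ) ≤ ‖∑ j, (z j - (a j : ℂ)) ^ 2‖
      + ‖∑ j, u j ^ 2‖ + 2 * ‖∑ j, u j * ((x j : ℂ) - (a j : ℂ))‖ := by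
    have : ((R ^ 2 : ℝ) : ℂ) = (∑ j, (z j - (a j : ℂ)) ^ 2)
        - (∑ j, u j ^ 2) - 2 * (∑ j, u j * ((x j : ℂ) - (a j : ℂ))) := by
      rw [hsplit]; ring
    calc (R ^ 2 : ℝ) = ‖((R ^ 2 : ℝ) : ℂ)‖ := by
          rw [Complex.norm_real, Real.norm_of_nonneg (by positivity)]
      _ ≤ _ := by
          rw [this]
          refine le_trans (norm_sub_le _ _) ?_
          gcongr
          · exact norm_sub_le _ _
          · rw [norm_mul]; simp
    
  nlinarith [hA, hB, hU, hUn, hR0, sq_nonneg (‖u‖ - s * R)]
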